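/- Let p(z) ∈ ℝ[z] have all zeros in the strip {z : |Im z| ≤ μ} and let λ > 0. Then all zeros of the polynomial g(D)p, where g(z) = sin(λz)/z acts as the differential operator Σ_{k≥0} (−1)^k λ^{2k+1} D^{2k}/((2k+1)!), lie in the strip {z : |Im z| ≤ δ} with δ = √(max(μ² − λ²/3, 0)). -/

import Mathlib

open Complex Polynomial

noncomputable def opApply (Φ : Polynomial ℝ) (p : Polynomial ℝ) : Polynomial ℝ :=
  (Polynomial.aeval (Polynomial.derivative : Module.End ℝ (Polynomial ℝ)) Φ) p

lemma opApply_eq_sum (Φ p : Polynomial ℝ) (N : ℕ) (hN : Φ.natDegree < N) :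
    opApply Φ p = ∑ k ∈ Finset.range N, Φ.coeff k • (Polynomial.derivative^[k] p) := by
  unfold opApply
  rw [Polynomial.aeval_eq_sum_range' hN]
  simp [Module.End.pow_apply]

lemma opApply_eq_sum' (Φ p : Polynomial ℝ) (N : ℕ) (hN : p.natDegree < N) :
    opApply Φ p = ∑ k ∈ Finset.range N, Φ.coeff k • (Polynomial.derivative^[k] p) := by
  rw [opApply_eq_sum Φ p (max (Φ.natDegree + 1) N) (lt_of_lt_of_le (Nat.lt_succ_self _) (le_max_left _ _))]
  symm
  apply Finset.sum_subset
  · exact Finset.range_subset_range.2 (le_max_right _ _)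
  · intro k _ hk
    have hk' : N ≤ k := by simpa using hk
    rw [Polynomial.iterate_derivative_eq_zero (lt_of_lt_of_le hN hk'), smul_zero]

lemma opApply_mul (Φ Ψ p : Polynomial ℝ) : opApply (Φ * Ψ) p = opApply Φ (opApply Ψ p) := by
  unfold opApply; rw [map_mul]; rfl

lemma opApply_smul (c : ℝ) (Φ p : Polynomial ℝ) : opApply (c • Φ) p = c • opApply Φ p := by
  unfold opApply; rw [map_smul]; rfl

lemma opApply_congr (Φ Ψ p : Polynomial ℝ) (h : ∀ k ≤ p.natDegree, Φ.coeff k = Ψ.coeff k) :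
    opApply Φ p = opApply Ψ p := by
  rw [opApply_eq_sum' Φ p (p.natDegree + 1) (Nat.lt_succ_self _),
    opApply_eq_sum' Ψ p (p.natDegree + 1) (Nat.lt_succ_self _)]
  apply Finset.sum_congr rfl
  intro k hk
  rw [h k (Nat.lt_succ_iff.1 (Finset.mem_range.1 hk))]

lemma natDegree_opApply_le (Φ p : Polynomial ℝ) : (opApply Φ p).natDegree ≤ p.natDegree := by
  rw [opApply_eq_sum Φ p (Φ.natDegree + 1) (Nat.lt_succ_self _)]
  apply Polynomial.natDegree_sum_le_of_forall_le
  intro k _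
  exact le_trans (Polynomial.natDegree_smul_le _ _)
    (le_trans (Polynomial.natDegree_iterate_derivative _ _) (Nat.sub_le _ _))

lemma coeff_opApply_natDegree (Φ p : Polynomial ℝ) :
    (opApply Φ p).coeff p.natDegree = Φ.coeff 0 * p.coeff p.natDegree := by
  rw [opApply_eq_sum Φ p (Φ.natDegree + 1) (Nat.lt_succ_self _), Polynomial.finset_sum_coeff]
  rw [Finset.sum_eq_single 0]
  · simp
  · intro k _ hk
    have hk1 : 1 ≤ k := Nat.one_le_iff_ne_zero.2 hk
    rcases Nat.eq_zero_or_pos p.natDegree with h0 | hpos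
    · rw [Polynomial.iterate_derivative_eq_zero (by omega), smul_zero, Polynomial.coeff_zero]
    · have : (Polynomial.derivative^[k] p).natDegree < p.natDegree :=
        lt_of_le_of_lt (Polynomial.natDegree_iterate_derivative _ _) (by omega)
      rw [Polynomial.coeff_smul, Polynomial.coeff_eq_zero_of_natDegree_lt this, smul_zero]
  · intro h; simp at h

noncomputable def evenPoly (c : ℕ → ℝ) (J : ℕ) : Polynomial ℝ :=
  ∑ j ∈ Finset.range J, Polynomial.C (c j) * Polynomial.X ^ (2 * j)

lemma evenPoly_coeff_even (c : ℕ → ℝ) (J j : ℕ) :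
    (evenPoly c J).coeff (2 * j) = if j < J then c j else 0 := by
  unfold evenPoly
  rw [Polynomial.finset_sum_coeff]
  by_cases hj : j < J
  · rw [Finset.sum_eq_single j]
    · simp [hj]
    · intro i _ hij
      rw [Polynomial.coeff_C_mul, Polynomial.coeff_X_pow, if_neg (by omega), mul_zero]
    · intro h; exact absurd (Finset.mem_range.2 hj) h
  · rw [if_neg hj]
    apply Finset.sum_eq_zero
    intro i hi
    have : i < J := Finset.mem_range.1 hi
    rw [Polynomial.coeff_C_mul, Polynomial.coeff_X_pow, if_neg (by omega), mul_zero]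

lemma evenPoly_coeff_odd (c : ℕ → ℝ) (J k : ℕ) (hk : k % 2 = 1) :
    (evenPoly c J).coeff k = 0 := by
  unfold evenPoly
  rw [Polynomial.finset_sum_coeff]
  apply Finset.sum_eq_zero
  intro i _
  rw [Polynomial.coeff_C_mul, Polynomial.coeff_X_pow, if_neg (by omega), mul_zero]

lemma sum_range_even {M : Type*} [AddCommMonoid M] (f : ℕ → M) (t : ℕ)
    (h : ∀ i, i % 2 = 1 → f i = 0) :
    ∑ i ∈ Finset.range (2 * t + 1), f i = ∑ u ∈ Finset.range (t + 1), f (2 * u) := by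
  induction t with
  | zero => simp
  | succ t ih =>
    have e1 : 2 * (t + 1) + 1 = (2 * t + 1) + 1 + 1 := by ring
    rw [e1, Finset.sum_range_succ, Finset.sum_range_succ, h (2 * t + 1) (by omega), add_zero, ih,
      Finset.sum_range_succ]
    have e2 : 2 * t + 1 + 1 = 2 * (t + 1) := by ring
    rw [e2, Finset.sum_range_succ, Finset.sum_range_succ]

noncomputable def cosP (a : ℝ) (J : ℕ) : Polynomial ℝ :=
  evenPoly (fun j => (-1 : ℝ) ^ j * a ^ (2 * j) / (Nat.factorial (2 * j))) J

noncomputable def sinP (a : ℝ) (J : ℕ) : Polynomial ℝ :=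
  evenPoly (fun j => (-1 : ℝ) ^ j * a ^ (2 * j + 1) / (Nat.factorial (2 * j + 1))) J

lemma opApply_evenPoly (c : ℕ → ℝ) (J : ℕ) (p : Polynomial ℝ) (hJ : p.natDegree < 2 * J) :
    opApply (evenPoly c J) p = ∑ j ∈ Finset.range J, c j • (Polynomial.derivative^[2 * j] p) := by
  rw [opApply_eq_sum' _ p (2 * p.natDegree + 1) (by omega)]
  rw [sum_range_even _ p.natDegree (fun i hi => by rw [evenPoly_coeff_odd c J i hi, zero_smul])]
  set n := p.natDegree with hn
  have step1 : ∑ u ∈ Finset.range (n + 1), (evenPoly c J).coeff (2 * u) • (Polynomial.derivative^[2 * u] p)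
      = ∑ j ∈ Finset.range (max (n + 1) J), (evenPoly c J).coeff (2 * j) • (Polynomial.derivative^[2 * j] p) := by
    apply Finset.sum_subset (Finset.range_subset_range.2 (le_max_left (n + 1) J))
    intro j hj hj'
    have : n < 2 * j := by simp at hj'; omega
    rw [Polynomial.iterate_derivative_eq_zero this, smul_zero]
  have step2 : ∑ j ∈ Finset.range J, c j • (Polynomial.derivative^[2 * j] p)
      = ∑ j ∈ Finset.range (max (n + 1) J), c j • (Polynomial.derivative^[2 * j] p) := by
    apply Finset.sum_subset (Finset.range_subset_range.2 (le_max_right (n + 1) J))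
    intro j hj hj'
    have : n < 2 * j := by simp at hj'; omega
    rw [Polynomial.iterate_derivative_eq_zero this, smul_zero]
  rw [step1, step2]
  apply Finset.sum_congr rfl
  intro j hj
  rw [evenPoly_coeff_even]
  by_cases h : j < J
  · rw [if_pos h]
  · rw [if_neg h, zero_smul]
    have : n < 2 * j := by omega
    rw [Polynomial.iterate_derivative_eq_zero this, smul_zero]

lemma sum_choose_even (t : ℕ) :
    (∑ u ∈ Finset.range (t + 1), ((2 * t + 1).choose (2 * u) : ℝ)) = 4 ^ t := by
  have S1 : (∑ i ∈ Finset.range (2 * t + 1 + 1), ((2 * t + 1).choose i : ℝ)) = 2 ^ (2 * t + 1) := by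
    have := Nat.sum_range_choose (2 * t + 1)
    have := congrArg (fun x : ℕ => (x : ℝ)) this
    push_cast at this
    simpa using this
  have S2 : (∑ i ∈ Finset.range (2 * t + 1 + 1), ((-1 : ℝ) ^ i * ((2 * t + 1).choose i : ℝ))) = 0 := by
    have := Int.alternating_sum_range_choose_of_ne (n := 2 * t + 1) (by omega)
    have := congrArg (fun x : ℤ => (x : ℝ)) this
    push_cast at this
    simpa using this
  have key : (∑ i ∈ Finset.range (2 * t + 1 + 1),
      ((1 + (-1 : ℝ) ^ i) / 2 * ((2 * t + 1).choose i : ℝ))) = 2 ^ (2 * t) := by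
    have : ∀ i, (1 + (-1 : ℝ) ^ i) / 2 * ((2 * t + 1).choose i : ℝ)
        = (((2 * t + 1).choose i : ℝ) + (-1 : ℝ) ^ i * ((2 * t + 1).choose i : ℝ)) / 2 := by
      intro i; ring
    rw [Finset.sum_congr rfl (fun i _ => this i), ← Finset.sum_div, Finset.sum_add_distrib, S1, S2]
    rw [add_zero]
    rw [pow_succ]
    ring
  have hodd : ∀ i, i % 2 = 1 → (1 + (-1 : ℝ) ^ i) / 2 * ((2 * t + 1).choose i : ℝ) = 0 := by
    intro i hi
    have : Odd i := Nat.odd_iff.2 hi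
    rw [this.neg_one_pow]
    ring
  rw [Finset.sum_range_succ, hodd (2 * t + 1) (by omega), add_zero,
    sum_range_even _ t hodd] at key
  have : ∀ u ∈ Finset.range (t + 1),
      (1 + (-1 : ℝ) ^ (2 * u)) / 2 * ((2 * t + 1).choose (2 * u) : ℝ)
        = ((2 * t + 1).choose (2 * u) : ℝ) := by
    intro u _
    rw [pow_mul, neg_one_sq, one_pow]
    ring
  rw [Finset.sum_congr rfl this] at key
  rw [key, show (4 : ℝ) = 2 ^ 2 by norm_num, ← pow_mul]

lemma coeff_sinP_even (a : ℝ) (J j : ℕ) :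
    (sinP a J).coeff (2 * j) = if j < J then (-1 : ℝ) ^ j * a ^ (2 * j + 1) / (Nat.factorial (2 * j + 1)) else 0 :=
  evenPoly_coeff_even _ J j

lemma coeff_cosP_even (a : ℝ) (J j : ℕ) :
    (cosP a J).coeff (2 * j) = if j < J then (-1 : ℝ) ^ j * a ^ (2 * j) / (Nat.factorial (2 * j)) else 0 :=
  evenPoly_coeff_even _ J j

lemma coeff_sinP_odd (a : ℝ) (J k : ℕ) (hk : k % 2 = 1) : (sinP a J).coeff k = 0 :=
  evenPoly_coeff_odd _ J k hk

lemma coeff_cosP_odd (a : ℝ) (J k : ℕ) (hk : k % 2 = 1) : (cosP a J).coeff k = 0 :=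
  evenPoly_coeff_odd _ J k hk

lemma conv_coeff (a : ℝ) (n k : ℕ) (hk : k ≤ n) :
    (cosP a (n + 1) * sinP a (n + 1)).coeff k
      = ((1 / 2 : ℝ) • sinP (2 * a) (n + 1)).coeff k := by
  rw [Polynomial.coeff_smul, Polynomial.coeff_mul,
    Finset.Nat.sum_antidiagonal_eq_sum_range_succ_mk]
  rcases Nat.even_or_odd k with he | ho
  · obtain ⟨t, ht⟩ := he
    subst ht
    have htn : t + t = 2 * t := by ring
    rw [htn] at hk ⊢
    have hodd : ∀ i, i % 2 = 1 → (cosP a (n+1)).coeff i * (sinP a (n+1)).coeff (2 * t - i) = 0 := by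
      intro i hi
      rw [coeff_cosP_odd _ _ i hi, zero_mul]
    rw [sum_range_even _ t hodd]
    have hterm : ∀ u ∈ Finset.range (t + 1),
        (cosP a (n+1)).coeff (2 * u) * (sinP a (n+1)).coeff (2 * t - 2 * u)
          = ((-1 : ℝ) ^ t * a ^ (2 * t + 1)) * (((2 * t + 1).choose (2 * u) : ℝ) / (Nat.factorial (2 * t + 1))) := by
      intro u hu
      have hu' : u ≤ t := by simpa [Nat.lt_succ_iff] using hu
      have h1 : 2 * t - 2 * u = 2 * (t - u) := by omega
      rw [h1, coeff_cosP_even, coeff_sinP_even, if_pos (by omega), if_pos (by omega)]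
      have hch : ((2 * t + 1).choose (2 * u) : ℝ)
          = (Nat.factorial (2 * t + 1) : ℝ) / ((Nat.factorial (2 * u)) * (Nat.factorial (2 * t + 1 - 2 * u))) :=
        Nat.cast_choose ℝ (by omega)
      have h2 : 2 * t + 1 - 2 * u = 2 * (t - u) + 1 := by omega
      rw [h2] at hch
      have hsign : (-1 : ℝ) ^ u * (-1 : ℝ) ^ (t - u) = (-1 : ℝ) ^ t := by
        rw [← pow_add]; congr 1; omega
      have hpow : a ^ (2 * u) * a ^ (2 * (t - u) + 1) = a ^ (2 * t + 1) := by
        rw [← pow_add]; congr 1; omega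
      have f1 : (Nat.factorial (2 * u) : ℝ) ≠ 0 := Nat.cast_ne_zero.2 (Nat.factorial_ne_zero _)
      have f2 : (Nat.factorial (2 * (t - u) + 1) : ℝ) ≠ 0 := Nat.cast_ne_zero.2 (Nat.factorial_ne_zero _)
      have f3 : (Nat.factorial (2 * t + 1) : ℝ) ≠ 0 := Nat.cast_ne_zero.2 (Nat.factorial_ne_zero _)
      have hDF : ((Nat.factorial (2 * t + 1) : ℝ) / ((Nat.factorial (2 * u) : ℝ) * (Nat.factorial (2 * (t - u) + 1)))) / (Nat.factorial (2 * t + 1) : ℝ)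
          = 1 / ((Nat.factorial (2 * u) : ℝ) * (Nat.factorial (2 * (t - u) + 1))) := by
        field_simp
      have hnum : (-1 : ℝ) ^ u * a ^ (2 * u) * ((-1 : ℝ) ^ (t - u) * a ^ (2 * (t - u) + 1))
          = (-1 : ℝ) ^ t * a ^ (2 * t + 1) := by
        calc (-1 : ℝ) ^ u * a ^ (2 * u) * ((-1 : ℝ) ^ (t - u) * a ^ (2 * (t - u) + 1))
            = ((-1 : ℝ) ^ u * (-1 : ℝ) ^ (t - u)) * (a ^ (2 * u) * a ^ (2 * (t - u) + 1)) := by ring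
          _ = _ := by rw [hsign, hpow]
      rw [hch, hDF, div_mul_div_comm, hnum, mul_one_div]
    rw [Finset.sum_congr rfl hterm, ← Finset.mul_sum, ← Finset.sum_div, sum_choose_even]
    rw [coeff_sinP_even _ _ t, if_pos (by omega), smul_eq_mul, mul_pow,
      show (4 : ℝ) ^ t = 2 ^ (2 * t) from by rw [show (4:ℝ) = 2^2 by norm_num, ← pow_mul]]
    have f3 : (Nat.factorial (2 * t + 1) : ℝ) ≠ 0 := Nat.cast_ne_zero.2 (Nat.factorial_ne_zero _)
    field_simp
    ring
  · obtain ⟨t, ht⟩ := ho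
    subst ht
    rw [coeff_sinP_odd _ _ _ (by omega), smul_zero]
    apply Finset.sum_eq_zero
    intro i hi
    show (cosP a (n+1)).coeff i * (sinP a (n+1)).coeff (2 * t + 1 - i) = 0
    have hi' : i < 2 * t + 1 + 1 := Finset.mem_range.1 hi
    rcases Nat.even_or_odd i with ⟨v, hv⟩ | ⟨v, hv⟩
    · rw [coeff_sinP_odd _ _ (2 * t + 1 - i) (by omega), mul_zero]
    · rw [coeff_cosP_odd _ _ i (by omega), zero_mul]

lemma taylor_eval_complex (Q : Polynomial ℂ) (z w : ℂ) :
    Q.eval (z + w) = ∑ k ∈ Finset.range (Q.natDegree + 1),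
      (Polynomial.derivative^[k] Q).eval z * w ^ k / (Nat.factorial k) := by
  rw [show z + w = w + z from add_comm _ _, ← Polynomial.taylor_eval z Q,
    Polynomial.eval_eq_sum_range, Polynomial.natDegree_taylor]
  apply Finset.sum_congr rfl
  intro k _
  rw [Polynomial.taylor_coeff]
  have hD : Polynomial.derivative^[k] Q = (Nat.factorial k) • Polynomial.hasseDeriv k Q := by
    rw [← Polynomial.factorial_smul_hasseDeriv]
    rfl
  rw [hD]
  have h2 : ((Nat.factorial k) • Polynomial.hasseDeriv k Q).eval z
      = (Nat.factorial k : ℂ) * (Polynomial.hasseDeriv k Q).eval z := by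
    rw [nsmul_eq_mul]
    simp
  rw [h2]
  have hf : (Nat.factorial k : ℂ) ≠ 0 := Nat.cast_ne_zero.2 (Nat.factorial_ne_zero _)
  field_simp

lemma aeval_eq_eval_map (q : Polynomial ℝ) (z : ℂ) :
    Polynomial.aeval z q = (q.map (algebraMap ℝ ℂ)).eval z := by
  rw [Polynomial.eval_map, Polynomial.aeval_def]

lemma aeval_opApply_cosP (q : Polynomial ℝ) (a : ℝ) (J : ℕ) (hJ : q.natDegree < J) (z : ℂ) :
    Polynomial.aeval z (opApply (cosP a J) q)
      = ((q.map (algebraMap ℝ ℂ)).eval (z + (a : ℂ) * I)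
        + (q.map (algebraMap ℝ ℂ)).eval (z - (a : ℂ) * I)) / 2 := by
  set Q := q.map (algebraMap ℝ ℂ) with hQdef
  have hdeg : Q.natDegree = q.natDegree :=
    Polynomial.natDegree_map_eq_of_injective (algebraMap ℝ ℂ).injective q
  set N := q.natDegree with hN
  have hLHS : Polynomial.aeval z (opApply (cosP a J) q)
      = ∑ j ∈ Finset.range J,
          ((-1 : ℝ) ^ j * a ^ (2 * j) / (Nat.factorial (2 * j)) : ℝ)
            • (Polynomial.derivative^[2 * j] Q).eval z := by
    rw [show cosP a J = evenPoly (fun j => (-1 : ℝ) ^ j * a ^ (2 * j) / (Nat.factorial (2 * j))) J from rfl,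
      opApply_evenPoly _ _ _ (by omega), map_sum]
    apply Finset.sum_congr rfl
    intro j _
    rw [map_smul, aeval_eq_eval_map, Polynomial.iterate_derivative_map]
  calc Polynomial.aeval z (opApply (cosP a J) q)
      = ∑ j ∈ Finset.range J,
          ((-1 : ℝ) ^ j * a ^ (2 * j) / (Nat.factorial (2 * j)) : ℝ)
            • (Polynomial.derivative^[2 * j] Q).eval z := hLHS
    _ = ∑ j ∈ Finset.range (max J (N + 1)),
          ((-1 : ℝ) ^ j * a ^ (2 * j) / (Nat.factorial (2 * j)) : ℝ)
            • (Polynomial.derivative^[2 * j] Q).eval z := by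
        apply Finset.sum_subset (Finset.range_subset_range.2 (le_max_left _ _))
        intro j _ hj
        have : N < 2 * j := by simp at hj; omega
        rw [Polynomial.iterate_derivative_eq_zero (by omega : Q.natDegree < 2 * j),
          Polynomial.eval_zero, smul_zero]
    _ = ∑ j ∈ Finset.range (max J (N + 1)),
          ((Polynomial.derivative^[2 * j] Q).eval z * ((a : ℂ) * I) ^ (2 * j) / (Nat.factorial (2 * j))
            + (Polynomial.derivative^[2 * j] Q).eval z * (-((a : ℂ) * I)) ^ (2 * j) / (Nat.factorial (2 * j))) / 2 := by
        apply Finset.sum_congr rfl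
        intro j _
        have hpow : (-((a : ℂ) * I)) ^ (2 * j) = ((a : ℂ) * I) ^ (2 * j) := by
          rw [neg_pow, (even_two_mul j).neg_one_pow, one_mul]
        have hip : ((a : ℂ) * I) ^ (2 * j) = ((-1 : ℂ)) ^ j * (a : ℂ) ^ (2 * j) := by
          rw [mul_pow, pow_mul, pow_mul, I_sq]; ring
        rw [hpow, hip, Complex.real_smul]
        have hf : ((Nat.factorial (2 * j) : ℂ)) ≠ 0 := Nat.cast_ne_zero.2 (Nat.factorial_ne_zero _)
        push_cast
        field_simp
        ring
    _ = ∑ j ∈ Finset.range (N + 1),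
          ((Polynomial.derivative^[2 * j] Q).eval z * ((a : ℂ) * I) ^ (2 * j) / (Nat.factorial (2 * j))
            + (Polynomial.derivative^[2 * j] Q).eval z * (-((a : ℂ) * I)) ^ (2 * j) / (Nat.factorial (2 * j))) / 2 := by
        symm
        apply Finset.sum_subset (Finset.range_subset_range.2 (le_max_right _ _))
        intro j _ hj
        have : N < 2 * j := by simp at hj; omega
        rw [Polynomial.iterate_derivative_eq_zero (by omega : Q.natDegree < 2 * j)]
        simp
    _ = ∑ k ∈ Finset.range (2 * N + 1),
          ((Polynomial.derivative^[k] Q).eval z * ((a : ℂ) * I) ^ k / (Nat.factorial k)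
            + (Polynomial.derivative^[k] Q).eval z * (-((a : ℂ) * I)) ^ k / (Nat.factorial k)) / 2 := by
        symm
        apply sum_range_even
        intro i hi
        have : Odd i := Nat.odd_iff.2 hi
        rw [this.neg_pow]
        ring
    _ = ∑ k ∈ Finset.range (N + 1),
          ((Polynomial.derivative^[k] Q).eval z * ((a : ℂ) * I) ^ k / (Nat.factorial k)
            + (Polynomial.derivative^[k] Q).eval z * (-((a : ℂ) * I)) ^ k / (Nat.factorial k)) / 2 := by
        symm
        apply Finset.sum_subset (Finset.range_subset_range.2 (by omega))
        intro k _ hk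
        have : N < k := by simp at hk; omega
        rw [Polynomial.iterate_derivative_eq_zero (by omega : Q.natDegree < k)]
        simp
    _ = (Q.eval (z + (a : ℂ) * I) + Q.eval (z - (a : ℂ) * I)) / 2 := by
        rw [taylor_eval_complex Q z ((a : ℂ) * I),
          show z - (a : ℂ) * I = z + (-((a : ℂ) * I)) from by ring,
          taylor_eval_complex Q z (-((a : ℂ) * I)), hdeg,
          ← Finset.sum_add_distrib, Finset.sum_div]

noncomputable def Complex.abs : AbsoluteValue ℂ ℝ := NormedField.toAbsoluteValue ℂ

lemma Complex.abs_ofReal (r : ℝ) : Complex.abs (r : ℂ) = |r| := Complex.norm_real r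

lemma Complex.sq_abs (z : ℂ) : Complex.abs z ^ 2 = Complex.normSq z := Complex.sq_norm z

lemma Complex.abs_im_le_abs (z : ℂ) : |z.im| ≤ Complex.abs z := Complex.abs_im_le_norm z

lemma multiset_map_prod_nonneg {α : Type*} (s : Multiset α) (f : α → ℝ)
    (h0 : ∀ x ∈ s, 0 ≤ f x) : 0 ≤ (s.map f).prod := by
  induction s using Multiset.induction_on with
  | empty => simp
  | cons a t ih =>
    rw [Multiset.map_cons, Multiset.prod_cons]
    exact mul_nonneg (h0 a (Multiset.mem_cons_self a t))
      (ih (fun x hx => h0 x (Multiset.mem_cons_of_mem hx)))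

lemma multiset_map_prod_le {α : Type*} (s : Multiset α) (f g : α → ℝ)
    (h0 : ∀ x ∈ s, 0 ≤ f x) (hle : ∀ x ∈ s, f x ≤ g x) :
    (s.map f).prod ≤ (s.map g).prod := by
  induction s using Multiset.induction_on with
  | empty => simp
  | cons a t ih =>
    rw [Multiset.map_cons, Multiset.prod_cons, Multiset.map_cons, Multiset.prod_cons]
    have h0' : ∀ x ∈ t, 0 ≤ f x := fun x hx => h0 x (Multiset.mem_cons_of_mem hx)
    have hle' : ∀ x ∈ t, f x ≤ g x := fun x hx => hle x (Multiset.mem_cons_of_mem hx)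
    apply mul_le_mul (hle a (Multiset.mem_cons_self a t)) (ih h0' hle')
      (multiset_map_prod_nonneg t f h0')
    exact le_trans (h0 a (Multiset.mem_cons_self a t)) (hle a (Multiset.mem_cons_self a t))

lemma multiset_map_prod_pos {α : Type*} (s : Multiset α) (g : α → ℝ)
    (h : ∀ x ∈ s, 0 < g x) : 0 < (s.map g).prod := by
  induction s using Multiset.induction_on with
  | empty => simp
  | cons a t ih =>
    rw [Multiset.map_cons, Multiset.prod_cons]
    exact mul_pos (h a (Multiset.mem_cons_self a t))
      (ih (fun x hx => h x (Multiset.mem_cons_of_mem hx)))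

lemma multiset_map_prod_lt {α : Type*} (s : Multiset α) (hs : s ≠ 0) (f g : α → ℝ)
    (h0 : ∀ x ∈ s, 0 ≤ f x) (hlt : ∀ x ∈ s, f x < g x) :
    (s.map f).prod < (s.map g).prod := by
  classical
  obtain ⟨a, ha⟩ := Multiset.exists_mem_of_ne_zero hs
  obtain ⟨t, rfl⟩ : ∃ t, s = a ::ₘ t := ⟨s.erase a, (Multiset.cons_erase ha).symm⟩
  rw [Multiset.map_cons, Multiset.prod_cons, Multiset.map_cons, Multiset.prod_cons]
  have h0' : ∀ x ∈ t, 0 ≤ f x := fun x hx => h0 x (Multiset.mem_cons_of_mem hx)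
  have hle' : ∀ x ∈ t, f x ≤ g x := fun x hx => le_of_lt (hlt x (Multiset.mem_cons_of_mem hx))
  have hPg : 0 < (t.map g).prod :=
    multiset_map_prod_pos t g
      (fun x hx => lt_of_le_of_lt (h0' x hx) (hlt x (Multiset.mem_cons_of_mem hx)))
  calc f a * (t.map f).prod
      ≤ f a * (t.map g).prod :=
        mul_le_mul_of_nonneg_left (multiset_map_prod_le t f g h0' hle')
          (h0 a (Multiset.mem_cons_self a t))
    _ < g a * (t.map g).prod :=
        mul_lt_mul_of_pos_right (hlt a (Multiset.mem_cons_self a t)) hPg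

lemma key_ineq (A y c β : ℝ) (hA : 0 ≤ A) (hy : 0 < y) (hc : 0 < c) (hβ : β ^ 2 < y ^ 2 + c ^ 2) :
    (A + (y - c - β) ^ 2) * (A + (y - c + β) ^ 2) < (A + (y + c - β) ^ 2) * (A + (y + c + β) ^ 2) := by
  have hid : (A + (y + c - β) ^ 2) * (A + (y + c + β) ^ 2)
      - (A + (y - c - β) ^ 2) * (A + (y - c + β) ^ 2)
      = 4 * c * y * (2 * A + 2 * (y ^ 2 + c ^ 2 - β ^ 2)) := by ring
  nlinarith [mul_pos (mul_pos (mul_pos (by norm_num : (0:ℝ) < 4) hc) hy)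
    (by nlinarith : (0:ℝ) < 2 * A + 2 * (y ^ 2 + c ^ 2 - β ^ 2))]

lemma cos_step_pos (q : Polynomial ℝ) (hq : q ≠ 0) (B c : ℝ) (hc : 0 < c) (J : ℕ)
    (hJ : q.natDegree < J)
    (hr : ∀ w : ℂ, Polynomial.aeval w q = 0 → w.im ^ 2 ≤ B)
    (z : ℂ) (hy : 0 < z.im)
    (h0 : Polynomial.aeval z (opApply (cosP c J) q) = 0) :
    z.im ^ 2 ≤ max (B - c ^ 2) 0 := by
  by_contra hcon
  push_neg at hcon
  have hB : B - c ^ 2 < z.im ^ 2 := lt_of_le_of_lt (le_max_left _ _) hcon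
  set Q := q.map (algebraMap ℝ ℂ) with hQdef
  have hQ0 : Q ≠ 0 := Polynomial.map_ne_zero hq
  have hsplits : Q.Splits := IsAlgClosed.splits Q
  have hfac : Q = Polynomial.C Q.leadingCoeff * (Q.roots.map fun r => Polynomial.X - Polynomial.C r).prod :=
    hsplits.eq_prod_roots
  have heval : ∀ w : ℂ, Complex.abs (Q.eval w)
      = Complex.abs Q.leadingCoeff * ((Q.roots.map fun r => Complex.abs (w - r))).prod := by
    intro w
    conv_lhs => rw [hfac]
    rw [Polynomial.eval_mul, Polynomial.eval_C, map_mul, Polynomial.eval_multiset_prod,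
      Multiset.map_map, map_multiset_prod, Multiset.map_map]
    congr 1
    congr 1
    apply Multiset.map_congr rfl
    intro r _
    simp
  have hroots2 : ∀ r ∈ Q.roots, r.im ^ 2 ≤ B := by
    intro r hrr
    apply hr r
    rw [aeval_eq_eval_map]
    exact Polynomial.isRoot_of_mem_roots hrr
  -- the functional equation
  rw [aeval_opApply_cosP q c J hJ z] at h0
  have hsum : Q.eval (z + (c : ℂ) * I) + Q.eval (z - (c : ℂ) * I) = 0 := by
    rcases div_eq_zero_iff.1 h0 with h | h
    · exact h
    · norm_num at h
  have heq : Q.eval (z + (c : ℂ) * I) = -Q.eval (z - (c : ℂ) * I) :=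
    eq_neg_of_add_eq_zero_left hsum
  have habs : Complex.abs (Q.eval (z + (c : ℂ) * I)) = Complex.abs (Q.eval (z - (c : ℂ) * I)) := by
    rw [heq, map_neg_eq_map]
  -- roots nonempty
  have hRne : Q.roots ≠ 0 := by
    intro hR
    have hcard := Polynomial.splits_iff_card_roots.1 hsplits
    rw [hR] at hcard
    simp at hcard
    have hQC : Q = Polynomial.C (Q.coeff 0) := Polynomial.eq_C_of_natDegree_eq_zero hcard.symm
    rw [hQC] at hsum
    simp only [Polynomial.eval_C] at hsum
    have hc0 : Q.coeff 0 = 0 := by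
      have h2 := add_self_eq_zero.1 hsum
      exact h2
    exact hQ0 (by rw [hQC, hc0, map_zero])
  -- equality of products
  have hlc : Complex.abs Q.leadingCoeff ≠ 0 := by
    simp [Polynomial.leadingCoeff_ne_zero.2 hQ0]
  have hAeq : ((Q.roots.map fun r => Complex.abs (z + (c : ℂ) * I - r))).prod
      = ((Q.roots.map fun r => Complex.abs (z - (c : ℂ) * I - r))).prod := by
    have := habs
    rw [heval, heval] at this
    exact mul_left_cancel₀ hlc this
  -- conjugation invariance of roots
  have hconjQ : Q.map (starRingEnd ℂ) = Q := by
    rw [hQdef, Polynomial.map_map]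
    congr 1
    ext r
    simp [Complex.conj_ofReal]
  have hconjR : Q.roots.map (starRingEnd ℂ) = Q.roots := by
    conv_rhs => rw [← hconjQ]
    rw [hsplits.roots_map_of_injective (starRingEnd ℂ).injective]
  -- pairing
  have hpair : ∀ w : ℂ, ((Q.roots.map fun r => Complex.abs (w - r))).prod ^ 2
      = (Q.roots.map (fun r => Complex.abs (w - r) * Complex.abs (w - (starRingEnd ℂ) r))).prod := by
    intro w
    rw [Multiset.prod_map_mul, sq]
    congr 1
    conv_lhs => rw [← hconjR]
    rw [Multiset.map_map]
    rfl
  -- strict inequality per root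
  have hpt : ∀ r ∈ Q.roots,
      Complex.abs (z - (c : ℂ) * I - r) * Complex.abs (z - (c : ℂ) * I - (starRingEnd ℂ) r)
        < Complex.abs (z + (c : ℂ) * I - r) * Complex.abs (z + (c : ℂ) * I - (starRingEnd ℂ) r) := by
    intro r hrr
    have hβ : r.im ^ 2 ≤ B := hroots2 r hrr
    apply lt_of_pow_lt_pow_left₀ 2 (by positivity)
    have e1 : Complex.abs (z - (c : ℂ) * I - r) ^ 2
        = (z.re - r.re) ^ 2 + (z.im - c - r.im) ^ 2 := by
      rw [Complex.sq_abs, Complex.normSq_apply]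
      simp [Complex.sub_re, Complex.sub_im, Complex.mul_re, Complex.mul_im]
      ring
    have e2 : Complex.abs (z - (c : ℂ) * I - (starRingEnd ℂ) r) ^ 2
        = (z.re - r.re) ^ 2 + (z.im - c + r.im) ^ 2 := by
      rw [Complex.sq_abs, Complex.normSq_apply]
      simp [Complex.sub_re, Complex.sub_im, Complex.mul_re, Complex.mul_im]
      ring
    have e3 : Complex.abs (z + (c : ℂ) * I - r) ^ 2
        = (z.re - r.re) ^ 2 + (z.im + c - r.im) ^ 2 := by
      rw [Complex.sq_abs, Complex.normSq_apply]
      simp [Complex.sub_re, Complex.sub_im, Complex.add_re, Complex.add_im,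
        Complex.mul_re, Complex.mul_im]
      ring
    have e4 : Complex.abs (z + (c : ℂ) * I - (starRingEnd ℂ) r) ^ 2
        = (z.re - r.re) ^ 2 + (z.im + c + r.im) ^ 2 := by
      rw [Complex.sq_abs, Complex.normSq_apply]
      simp [Complex.sub_re, Complex.sub_im, Complex.add_re, Complex.add_im,
        Complex.mul_re, Complex.mul_im]
      ring
    rw [mul_pow, mul_pow, e1, e2, e3, e4]
    exact key_ineq _ _ _ _ (by positivity) hy hc (by nlinarith)
  have hstrict := multiset_map_prod_lt Q.roots hRne _ _
    (fun r _ => mul_nonneg (AbsoluteValue.nonneg _ _) (AbsoluteValue.nonneg _ _)) hpt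
  rw [← hpair, ← hpair, hAeq] at hstrict
  exact lt_irrefl _ hstrict

lemma cos_step (q : Polynomial ℝ) (hq : q ≠ 0) (B c : ℝ) (hc : 0 < c) (J : ℕ)
    (hJ : q.natDegree < J)
    (hr : ∀ w : ℂ, Polynomial.aeval w q = 0 → w.im ^ 2 ≤ B) :
    ∀ z : ℂ, Polynomial.aeval z (opApply (cosP c J) q) = 0 →
      z.im ^ 2 ≤ max (B - c ^ 2) 0 := by
  intro z h0
  rcases lt_trichotomy z.im 0 with hneg | hzero | hpos
  · have hconj : Polynomial.aeval ((starRingEnd ℂ) z) (opApply (cosP c J) q) = 0 := by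
      rw [Polynomial.aeval_conj, h0, map_zero]
    have := cos_step_pos q hq B c hc J hJ hr ((starRingEnd ℂ) z)
      (by rw [Complex.conj_im]; linarith) hconj
    rwa [Complex.conj_im, neg_pow, (by norm_num : (-1 : ℝ) ^ 2 = 1), one_mul] at this
  · rw [hzero]
    simpa using le_max_right (B - c ^ 2) 0
  · exact cos_step_pos q hq B c hc J hJ hr z hpos h0

lemma sinP_coeff_zero (a : ℝ) (J : ℕ) (hJ : 0 < J) : (sinP a J).coeff 0 = a := by
  have h := coeff_sinP_even a J 0
  norm_num at h
  rw [if_pos hJ] at h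
  simpa using h

lemma opApply_facts (Φ p : Polynomial ℝ) (h : Φ.coeff 0 * p.leadingCoeff ≠ 0) :
    (opApply Φ p).natDegree = p.natDegree ∧
      (opApply Φ p).leadingCoeff = Φ.coeff 0 * p.leadingCoeff := by
  have hco : (opApply Φ p).coeff p.natDegree = Φ.coeff 0 * p.leadingCoeff :=
    coeff_opApply_natDegree Φ p
  have hge : p.natDegree ≤ (opApply Φ p).natDegree :=
    Polynomial.le_natDegree_of_ne_zero (by rw [hco]; exact h)
  have heq : (opApply Φ p).natDegree = p.natDegree :=
    le_antisymm (natDegree_opApply_le Φ p) hge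
  exact ⟨heq, by rw [Polynomial.leadingCoeff, heq, hco]⟩

noncomputable def sigma3 (m : ℕ) : ℝ := (1 - (1/4 : ℝ) ^ m) / 3

lemma max_shift (x cc : ℝ) (hc : 0 ≤ cc) : max (max x 0 - cc) 0 ≤ max (x - cc) 0 := by
  apply max_le _ (le_max_right _ _)
  rcases le_total x 0 with h | h
  · rw [max_eq_right h]
    have := le_max_right (x - cc) 0
    linarith
  · rw [max_eq_left h]
    exact le_max_left _ _

lemma sin_iter (p : Polynomial ℝ) (hp : p ≠ 0) : ∀ (m : ℕ) (a : ℝ), 0 < a → ∀ B : ℝ,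
    (∀ w : ℂ, Polynomial.aeval w (opApply (sinP (a / 2 ^ m) (p.natDegree + 1)) p) = 0 →
      w.im ^ 2 ≤ B) →
    ∀ z : ℂ, Polynomial.aeval z (opApply (sinP a (p.natDegree + 1)) p) = 0 →
      z.im ^ 2 ≤ max (B - a ^ 2 * sigma3 m) 0 := by
  intro m
  induction m with
  | zero =>
    intro a ha B hB z hz
    simp only [pow_zero, div_one] at hB
    have h1 := hB z hz
    have hσ : sigma3 0 = 0 := by simp [sigma3]
    rw [hσ]
    have : B - a ^ 2 * 0 = B := by ring
    rw [this]
    exact le_trans h1 (le_max_left _ _)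
  | succ m ih =>
    intro a ha B hB z hz
    set n := p.natDegree with hn
    have ha2 : 0 < a / 2 := by linarith
    have hdiv : a / 2 ^ (m + 1) = (a / 2) / 2 ^ m := by rw [pow_succ]; ring
    rw [hdiv] at hB
    have ihq := ih (a / 2) ha2 B hB
    set q := opApply (sinP (a / 2) (n + 1)) p with hqdef
    have hcoe0 : (sinP (a / 2) (n + 1)).coeff 0 = a / 2 := sinP_coeff_zero _ _ (by omega)
    have hne : (sinP (a / 2) (n + 1)).coeff 0 * p.leadingCoeff ≠ 0 := by
      rw [hcoe0]
      exact mul_ne_zero (ne_of_gt ha2) (Polynomial.leadingCoeff_ne_zero.2 hp)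
    have hq0 : q ≠ 0 := by
      intro h
      apply hne
      rw [← (opApply_facts _ _ hne).2, ← hqdef, h, Polynomial.leadingCoeff_zero]
    have hqdeg : q.natDegree < n + 1 := Nat.lt_succ_of_le (natDegree_opApply_le _ _)
    have hop : opApply (cosP (a / 2) (n + 1)) q = (1 / 2 : ℝ) • opApply (sinP a (n + 1)) p := by
      rw [hqdef, ← opApply_mul,
        opApply_congr (cosP (a / 2) (n + 1) * sinP (a / 2) (n + 1))
          ((1 / 2 : ℝ) • sinP (2 * (a / 2)) (n + 1)) p
          (fun k hk => conv_coeff (a / 2) n k hk),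
        show 2 * (a / 2) = a by ring, opApply_smul]
    have hz' : Polynomial.aeval z (opApply (cosP (a / 2) (n + 1)) q) = 0 := by
      rw [hop, map_smul, hz, smul_zero]
    have hstep := cos_step q hq0 (max (B - (a / 2) ^ 2 * sigma3 m) 0) (a / 2) ha2 (n + 1)
      hqdeg ihq z hz'
    refine le_trans hstep ?_
    calc max (max (B - (a / 2) ^ 2 * sigma3 m) 0 - (a / 2) ^ 2) 0
        ≤ max ((B - (a / 2) ^ 2 * sigma3 m) - (a / 2) ^ 2) 0 := max_shift _ _ (by positivity)
      _ = max (B - a ^ 2 * sigma3 (m + 1)) 0 := by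
          congr 1
          have hs : a ^ 2 * sigma3 (m + 1) = (a / 2) ^ 2 * sigma3 m + (a / 2) ^ 2 := by
            simp only [sigma3, pow_succ]
            ring
          linarith

lemma multiset_exists_min {α : Type*} (s : Multiset α) (hs : s ≠ 0) (f : α → ℝ) :
    ∃ r ∈ s, ∀ x ∈ s, f r ≤ f x := by
  induction s using Multiset.induction_on with
  | empty => exact absurd rfl hs
  | cons a t ih =>
    by_cases ht : t = 0
    · subst ht
      exact ⟨a, Multiset.mem_cons_self a 0, by intro x hx; simp at hx; subst hx; exact le_refl _⟩
    · obtain ⟨r, hr, hmin⟩ := ih ht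
      rcases le_total (f a) (f r) with h | h
      · refine ⟨a, Multiset.mem_cons_self a t, ?_⟩
        intro x hx
        rcases Multiset.mem_cons.1 hx with rfl | hx'
        · exact le_refl _
        · exact le_trans h (hmin x hx')
      · refine ⟨r, Multiset.mem_cons_of_mem hr, ?_⟩
        intro x hx
        rcases Multiset.mem_cons.1 hx with rfl | hx'
        · exact h
        · exact hmin x hx'

lemma multiset_pow_card_le_prod {α : Type*} (s : Multiset α) (f : α → ℝ) (d : ℝ)
    (hd : 0 ≤ d) (h : ∀ x ∈ s, d ≤ f x) :
    d ^ (Multiset.card s) ≤ (s.map f).prod := by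
  induction s using Multiset.induction_on with
  | empty => simp
  | cons a t ih =>
    rw [Multiset.map_cons, Multiset.prod_cons, Multiset.card_cons, pow_succ, mul_comm]
    apply mul_le_mul (h a (Multiset.mem_cons_self a t))
      (ih (fun x hx => h x (Multiset.mem_cons_of_mem hx)))
      (pow_nonneg hd _)
      (le_trans hd (h a (Multiset.mem_cons_self a t)))

lemma abs_eval_eq (P : Polynomial ℂ) (w : ℂ) :
    Complex.abs (P.eval w)
      = Complex.abs P.leadingCoeff * ((P.roots.map fun r => Complex.abs (w - r))).prod := by
  have hsplits : P.Splits := IsAlgClosed.splits P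
  have hfac : P = Polynomial.C P.leadingCoeff
      * (P.roots.map fun r => Polynomial.X - Polynomial.C r).prod :=
    hsplits.eq_prod_roots
  conv_lhs => rw [hfac]
  rw [Polynomial.eval_mul, Polynomial.eval_C, map_mul, Polynomial.eval_multiset_prod,
    Multiset.map_map, map_multiset_prod, Multiset.map_map]
  congr 2
  apply Multiset.map_congr rfl
  intro r _
  simp

lemma exists_close_root (P : Polynomial ℂ) (hdeg : P.natDegree ≠ 0) (w : ℂ) :
    ∃ r ∈ P.roots, Complex.abs (w - r) ^ P.natDegree
      ≤ Complex.abs (P.eval w) / Complex.abs P.leadingCoeff := by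
  have hP0 : P ≠ 0 := fun h => hdeg (by rw [h]; simp)
  have hsplits : P.Splits := IsAlgClosed.splits P
  have hcard : Multiset.card P.roots = P.natDegree := Polynomial.splits_iff_card_roots.1 hsplits
  have hRne : P.roots ≠ 0 := by
    intro h
    rw [h] at hcard
    simp at hcard
    exact hdeg hcard.symm
  obtain ⟨r, hr, hmin⟩ := multiset_exists_min P.roots hRne (fun x => Complex.abs (w - x))
  refine ⟨r, hr, ?_⟩
  have hlc : 0 < Complex.abs P.leadingCoeff := by
    simp [AbsoluteValue.pos_iff, Polynomial.leadingCoeff_ne_zero.2 hP0]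
  rw [le_div_iff₀ hlc]
  have h1 : Complex.abs (w - r) ^ P.natDegree ≤ ((P.roots.map fun x => Complex.abs (w - x))).prod := by
    rw [← hcard]
    exact multiset_pow_card_le_prod _ _ _ (AbsoluteValue.nonneg _ _) hmin
  calc Complex.abs (w - r) ^ P.natDegree * Complex.abs P.leadingCoeff
      ≤ ((P.roots.map fun x => Complex.abs (w - x))).prod * Complex.abs P.leadingCoeff :=
        mul_le_mul_of_nonneg_right h1 (le_of_lt hlc)
    _ = Complex.abs (P.eval w) := by rw [abs_eval_eq]; ring

lemma eval_bound (Q : Polynomial ℂ) (w : ℂ) (N : ℕ) (hN : Q.natDegree < N) :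
    Complex.abs (Q.eval w)
      ≤ (∑ i ∈ Finset.range N, Complex.abs (Q.coeff i)) * max 1 (Complex.abs w) ^ N := by
  rw [Polynomial.eval_eq_sum_range' hN]
  calc Complex.abs (∑ i ∈ Finset.range N, Q.coeff i * w ^ i)
      ≤ ∑ i ∈ Finset.range N, Complex.abs (Q.coeff i * w ^ i) :=
        Complex.abs.sum_le _ _
    _ ≤ ∑ i ∈ Finset.range N, Complex.abs (Q.coeff i) * max 1 (Complex.abs w) ^ N := by
        apply Finset.sum_le_sum
        intro i hi
        rw [map_mul, map_pow]
        apply mul_le_mul_of_nonneg_left _ (AbsoluteValue.nonneg _ _)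
        calc Complex.abs w ^ i ≤ max 1 (Complex.abs w) ^ i :=
              pow_le_pow_left₀ (AbsoluteValue.nonneg _ _) (le_max_right _ _) _
          _ ≤ max 1 (Complex.abs w) ^ N :=
              pow_le_pow_right₀ (le_max_left _ _) (le_of_lt (Finset.mem_range.1 hi))
    _ = (∑ i ∈ Finset.range N, Complex.abs (Q.coeff i)) * max 1 (Complex.abs w) ^ N := by
        rw [← Finset.sum_mul]

lemma root_size (Q : Polynomial ℂ) (hQ0 : Q ≠ 0) (z : ℂ) (hz : Q.eval z = 0) :
    Complex.abs z ≤ 1 + (∑ i ∈ Finset.range Q.natDegree, Complex.abs (Q.coeff i))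
      / Complex.abs Q.leadingCoeff := by
  set n := Q.natDegree with hn
  set S := ∑ i ∈ Finset.range n, Complex.abs (Q.coeff i) with hS
  set L := Complex.abs Q.leadingCoeff with hL
  have hLpos : 0 < L := by
    simp only [hL, AbsoluteValue.pos_iff]
    exact Polynomial.leadingCoeff_ne_zero.2 hQ0
  have hSnn : 0 ≤ S := Finset.sum_nonneg fun i _ => AbsoluteValue.nonneg _ _
  rcases Nat.eq_zero_or_pos n with h0 | hpos
  · exfalso
    have hQC : Q = Polynomial.C (Q.coeff 0) := Polynomial.eq_C_of_natDegree_eq_zero h0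
    rw [hQC, Polynomial.eval_C] at hz
    apply hQ0
    rw [hQC, hz, map_zero]
  by_contra hcon
  push_neg at hcon
  have habs1 : (1 : ℝ) ≤ Complex.abs z := by
    have : 0 ≤ S / L := div_nonneg hSnn (le_of_lt hLpos)
    linarith
  -- eval as sum
  have hsum : Q.eval z = (∑ i ∈ Finset.range n, Q.coeff i * z ^ i) + Q.leadingCoeff * z ^ n := by
    rw [Polynomial.eval_eq_sum_range, Finset.sum_range_succ]
    rfl
  have hmain : L * Complex.abs z ^ n = Complex.abs (∑ i ∈ Finset.range n, Q.coeff i * z ^ i) := by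
    have hneg : Q.leadingCoeff * z ^ n = -(∑ i ∈ Finset.range n, Q.coeff i * z ^ i) := by
      rw [hz] at hsum
      linear_combination -hsum
    have h3 : Complex.abs (Q.leadingCoeff * z ^ n)
        = Complex.abs (∑ i ∈ Finset.range n, Q.coeff i * z ^ i) := by
      rw [hneg, map_neg_eq_map]
    rw [map_mul, map_pow] at h3
    exact h3
  have hbound : Complex.abs (∑ i ∈ Finset.range n, Q.coeff i * z ^ i)
      ≤ S * Complex.abs z ^ (n - 1) := by
    calc Complex.abs (∑ i ∈ Finset.range n, Q.coeff i * z ^ i)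
        ≤ ∑ i ∈ Finset.range n, Complex.abs (Q.coeff i * z ^ i) := Complex.abs.sum_le _ _
      _ ≤ ∑ i ∈ Finset.range n, Complex.abs (Q.coeff i) * Complex.abs z ^ (n - 1) := by
          apply Finset.sum_le_sum
          intro i hi
          rw [map_mul, map_pow]
          apply mul_le_mul_of_nonneg_left _ (AbsoluteValue.nonneg _ _)
          have hin := Finset.mem_range.1 hi
          exact pow_le_pow_right₀ habs1 (by omega)
      _ = S * Complex.abs z ^ (n - 1) := by rw [hS, ← Finset.sum_mul]
  have hzn : Complex.abs z ^ n = Complex.abs z * Complex.abs z ^ (n - 1) := by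
    rw [← pow_succ']
    congr 1
    omega
  have hpowpos : 0 < Complex.abs z ^ (n - 1) := by positivity
  have h4 : L * Complex.abs z ≤ S := by
    have h2 : L * Complex.abs z * Complex.abs z ^ (n - 1) ≤ S * Complex.abs z ^ (n - 1) := by
      calc L * Complex.abs z * Complex.abs z ^ (n - 1) = L * Complex.abs z ^ n := by
            rw [hzn]; ring
        _ = Complex.abs (∑ i ∈ Finset.range n, Q.coeff i * z ^ i) := hmain
        _ ≤ S * Complex.abs z ^ (n - 1) := hbound
    exact le_of_mul_le_mul_right h2 hpowpos
  have h5 : Complex.abs z ≤ S / L := by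
    rw [le_div_iff₀ hLpos]
    linarith
  linarith

lemma aeval_opApply_sum (Φ p : Polynomial ℝ) (N : ℕ) (hN : p.natDegree < N) (w : ℂ) :
    Polynomial.aeval w (opApply Φ p)
      = ∑ k ∈ Finset.range N, Φ.coeff k • Polynomial.aeval w (Polynomial.derivative^[k] p) := by
  rw [opApply_eq_sum' Φ p N hN, map_sum]
  exact Finset.sum_congr rfl fun k _ => map_smul _ _ _

lemma sinP_coeff_abs_le (ε : ℝ) (hε0 : 0 ≤ ε) (hε1 : ε ≤ 1) (J k : ℕ) :
    |(sinP ε J).coeff k| ≤ ε ^ (k + 1) := by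
  rcases Nat.even_or_odd k with ⟨j, hj⟩ | ho
  · have h2 : k = 2 * j := by omega
    subst h2
    rw [coeff_sinP_even]
    by_cases hjJ : j < J
    · rw [if_pos hjJ]
      have hfact : (1 : ℝ) ≤ (Nat.factorial (2 * j + 1) : ℝ) := by
        exact_mod_cast Nat.one_le_iff_ne_zero.2 (Nat.factorial_ne_zero _)
      rw [abs_div, abs_mul]
      have h1 : |(-1 : ℝ) ^ j| = 1 := by
        rw [_root_.abs_pow, abs_neg, abs_one, one_pow]
      have h2 : |ε ^ (2 * j + 1)| = ε ^ (2 * j + 1) := _root_.abs_of_nonneg (pow_nonneg hε0 _)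
      rw [h1, h2, one_mul, Nat.abs_cast]
      exact div_le_self (pow_nonneg hε0 _) hfact
    · rw [if_neg hjJ]
      simpa using pow_nonneg hε0 (2 * j + 1)
  · obtain ⟨v, hv⟩ := ho
    rw [coeff_sinP_odd _ _ _ (by omega)]
    simpa using pow_nonneg hε0 (k + 1)

lemma sinP_coeff_abs_le_one (ε : ℝ) (hε0 : 0 ≤ ε) (hε1 : ε ≤ 1) (J k : ℕ) :
    |(sinP ε J).coeff k| ≤ ε := by
  calc |(sinP ε J).coeff k| ≤ ε ^ (k + 1) := sinP_coeff_abs_le ε hε0 hε1 J k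
    _ ≤ ε ^ 1 := pow_le_pow_of_le_one hε0 hε1 (by omega)
    _ = ε := pow_one ε

lemma sinP_coeff_abs_le_sq (ε : ℝ) (hε0 : 0 ≤ ε) (hε1 : ε ≤ 1) (J k : ℕ) (hk : 1 ≤ k) :
    |(sinP ε J).coeff k| ≤ ε ^ 2 := by
  calc |(sinP ε J).coeff k| ≤ ε ^ (k + 1) := sinP_coeff_abs_le ε hε0 hε1 J k
    _ ≤ ε ^ 2 := pow_le_pow_of_le_one hε0 hε1 (by omega)

noncomputable def pertCK (p : Polynomial ℝ) : ℝ :=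
  ∑ k ∈ Finset.range p.natDegree, ∑ i ∈ Finset.range (p.natDegree + 1),
    |(Polynomial.derivative^[k + 1] p).coeff i|

noncomputable def pertD0 (p : Polynomial ℝ) : ℝ :=
  ∑ i ∈ Finset.range p.natDegree, ∑ k ∈ Finset.range (p.natDegree + 1),
    |(Polynomial.derivative^[k] p).coeff i|

noncomputable def pertR (p : Polynomial ℝ) : ℝ := max 1 (1 + pertD0 p / |p.leadingCoeff|)

noncomputable def pertC (p : Polynomial ℝ) : ℝ :=
  pertCK p * pertR p ^ (p.natDegree + 1) / |p.leadingCoeff|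

lemma pertCK_nonneg (p : Polynomial ℝ) : 0 ≤ pertCK p :=
  Finset.sum_nonneg fun k _ => Finset.sum_nonneg fun i _ => abs_nonneg _

lemma pertD0_nonneg (p : Polynomial ℝ) : 0 ≤ pertD0 p :=
  Finset.sum_nonneg fun k _ => Finset.sum_nonneg fun i _ => abs_nonneg _

lemma pertR_pos (p : Polynomial ℝ) : 0 < pertR p := lt_of_lt_of_le one_pos (le_max_left _ _)

lemma pertC_nonneg (p : Polynomial ℝ) : 0 ≤ pertC p :=
  div_nonneg (mul_nonneg (pertCK_nonneg p) (pow_nonneg (pertR_pos p).le _)) (abs_nonneg _)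

lemma pert_bound (p : Polynomial ℝ) (hp : p ≠ 0) (hn : p.natDegree ≠ 0) (μ : ℝ)
    (hroots : ∀ z : ℂ, Polynomial.aeval z p = 0 → |z.im| ≤ μ)
    (ε εb : ℝ) (hε0 : 0 < ε) (hε1 : ε ≤ 1) (hεb : 0 < εb)
    (hsmall : ε * pertC p ≤ εb ^ p.natDegree) :
    ∀ w : ℂ, Polynomial.aeval w (opApply (sinP ε (p.natDegree + 1)) p) = 0 →
      w.im ^ 2 ≤ (μ + εb) ^ 2 := by
  intro w hw
  set n := p.natDegree with hn'
  set lc := p.leadingCoeff with hlc'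
  have hlcne : lc ≠ 0 := Polynomial.leadingCoeff_ne_zero.2 hp
  have hlcpos : 0 < |lc| := abs_pos.2 hlcne
  set s := opApply (sinP ε (n + 1)) p with hsdef
  have hcoe0 : (sinP ε (n + 1)).coeff 0 = ε := sinP_coeff_zero _ _ (by omega)
  have hfne : (sinP ε (n + 1)).coeff 0 * p.leadingCoeff ≠ 0 := by
    rw [hcoe0]; exact mul_ne_zero (ne_of_gt hε0) hlcne
  have hfacts := opApply_facts (sinP ε (n + 1)) p hfne
  have hsl : s.leadingCoeff = ε * lc := by
    rw [hsdef, hfacts.2, hcoe0, hlc']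
  have hsne : s ≠ 0 := by
    intro h
    apply mul_ne_zero (ne_of_gt hε0) hlcne
    rw [← hsl, h, Polynomial.leadingCoeff_zero]
  have hsdeg : s.natDegree = n := by rw [hsdef, hfacts.1]
  set P := p.map (algebraMap ℝ ℂ) with hPdef
  set S := s.map (algebraMap ℝ ℂ) with hSdef
  have hPdeg : P.natDegree = n :=
    Polynomial.natDegree_map_eq_of_injective (algebraMap ℝ ℂ).injective p
  have hSdeg : S.natDegree = n := by
    rw [hSdef, Polynomial.natDegree_map_eq_of_injective (algebraMap ℝ ℂ).injective, hsdeg]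
  have hS0 : S ≠ 0 := Polynomial.map_ne_zero hsne
  have hweval : S.eval w = 0 := by rw [hSdef, ← aeval_eq_eval_map]; exact hw
  -- coefficients of s
  have hscoeff_bound : ∀ i, |s.coeff i|
      ≤ ε * ∑ k ∈ Finset.range (n + 1), |(Polynomial.derivative^[k] p).coeff i| := by
    intro i
    have hsc : s.coeff i = ∑ k ∈ Finset.range (n + 1),
        (sinP ε (n + 1)).coeff k * (Polynomial.derivative^[k] p).coeff i := by
      rw [hsdef, opApply_eq_sum' _ p (n + 1) (by omega), Polynomial.finset_sum_coeff]
      exact Finset.sum_congr rfl fun k _ => by rw [Polynomial.coeff_smul, smul_eq_mul]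
    rw [hsc, Finset.mul_sum]
    refine le_trans (Finset.abs_sum_le_sum_abs _ _) (Finset.sum_le_sum fun k _ => ?_)
    rw [abs_mul]
    exact mul_le_mul_of_nonneg_right (sinP_coeff_abs_le_one ε hε0.le hε1 _ _) (abs_nonneg _)
  -- size of the root w
  have hwsize : Complex.abs w ≤ pertR p := by
    have h1 := root_size S hS0 w hweval
    have hScoeff : ∀ i, Complex.abs (S.coeff i) = |s.coeff i| := by
      intro i; rw [hSdef, Polynomial.coeff_map]; exact Complex.abs_ofReal _
    have hSlc : Complex.abs S.leadingCoeff = ε * |lc| := by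
      have : S.leadingCoeff = algebraMap ℝ ℂ s.leadingCoeff := by
        rw [Polynomial.leadingCoeff, hSdeg, ← hsdeg, hSdef, Polynomial.coeff_map]
        rfl
      rw [this, hsl]
      show Complex.abs ((ε * lc : ℝ) : ℂ) = ε * |lc|
      rw [Complex.abs_ofReal, abs_mul, abs_of_pos hε0]
    have hnum : ∑ i ∈ Finset.range S.natDegree, Complex.abs (S.coeff i) ≤ ε * pertD0 p := by
      rw [hSdeg]
      unfold pertD0
      rw [← hn', Finset.mul_sum]
      apply Finset.sum_le_sum
      intro i _
      rw [hScoeff]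
      exact hscoeff_bound i
    have hden : (0 : ℝ) < ε * |lc| := by positivity
    calc Complex.abs w
        ≤ 1 + (∑ i ∈ Finset.range S.natDegree, Complex.abs (S.coeff i))
            / Complex.abs S.leadingCoeff := h1
      _ ≤ 1 + (ε * pertD0 p) / (ε * |lc|) := by
          rw [hSlc]
          exact add_le_add_right ((div_le_div_iff_of_pos_right hden).2 hnum) 1
      _ = 1 + pertD0 p / |lc| := by rw [mul_div_mul_left _ _ (ne_of_gt hε0)]
      _ ≤ pertR p := le_max_right 1 _
  -- bound on |P(w)|
  have hPweval : Complex.abs (P.eval w) ≤ ε * (pertCK p * pertR p ^ (n + 1)) := by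
    have heq0 := aeval_opApply_sum (sinP ε (n + 1)) p (n + 1) (by omega) w
    rw [← hsdef, hw, Finset.sum_range_succ'] at heq0
    simp only [Function.iterate_zero, id_eq, hcoe0] at heq0
    have hmaineq : (ε : ℂ) * Polynomial.aeval w p
        = -(∑ k ∈ Finset.range n, (sinP ε (n + 1)).coeff (k + 1)
            • Polynomial.aeval w (Polynomial.derivative^[k + 1] p)) := by
      rw [← Complex.real_smul]
      exact eq_neg_of_add_eq_zero_right heq0.symm
    have habs1 : ε * Complex.abs (Polynomial.aeval w p)
        ≤ ∑ k ∈ Finset.range n, |(sinP ε (n + 1)).coeff (k + 1)|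
            * Complex.abs (Polynomial.aeval w (Polynomial.derivative^[k + 1] p)) := by
      calc ε * Complex.abs (Polynomial.aeval w p)
          = Complex.abs ((ε : ℂ) * Polynomial.aeval w p) := by
            rw [map_mul, Complex.abs_ofReal, abs_of_pos hε0]
        _ = Complex.abs (∑ k ∈ Finset.range n, (sinP ε (n + 1)).coeff (k + 1)
              • Polynomial.aeval w (Polynomial.derivative^[k + 1] p)) := by
            rw [hmaineq, map_neg_eq_map]
        _ ≤ ∑ k ∈ Finset.range n, Complex.abs ((sinP ε (n + 1)).coeff (k + 1)
              • Polynomial.aeval w (Polynomial.derivative^[k + 1] p)) :=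
            Complex.abs.sum_le _ _
        _ = ∑ k ∈ Finset.range n, |(sinP ε (n + 1)).coeff (k + 1)|
              * Complex.abs (Polynomial.aeval w (Polynomial.derivative^[k + 1] p)) := by
            apply Finset.sum_congr rfl
            intro k _
            rw [Complex.real_smul, map_mul, Complex.abs_ofReal]
    have hterm : ∀ k ∈ Finset.range n,
        |(sinP ε (n + 1)).coeff (k + 1)|
            * Complex.abs (Polynomial.aeval w (Polynomial.derivative^[k + 1] p))
          ≤ ε ^ 2 * ((∑ i ∈ Finset.range (n + 1), |(Polynomial.derivative^[k + 1] p).coeff i|)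
              * pertR p ^ (n + 1)) := by
      intro k _
      apply mul_le_mul (sinP_coeff_abs_le_sq ε hε0.le hε1 _ _ (by omega)) ?_
        (AbsoluteValue.nonneg _ _) (by positivity)
      rw [aeval_eq_eval_map]
      have hdegk : ((Polynomial.derivative^[k + 1] p).map (algebraMap ℝ ℂ)).natDegree < n + 1 := by
        rw [Polynomial.natDegree_map_eq_of_injective (algebraMap ℝ ℂ).injective]
        exact lt_of_le_of_lt (le_trans (Polynomial.natDegree_iterate_derivative _ _)
          (Nat.sub_le _ _)) (by omega)
      calc Complex.abs (((Polynomial.derivative^[k + 1] p).map (algebraMap ℝ ℂ)).eval w)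
          ≤ (∑ i ∈ Finset.range (n + 1),
              Complex.abs (((Polynomial.derivative^[k + 1] p).map (algebraMap ℝ ℂ)).coeff i))
              * max 1 (Complex.abs w) ^ (n + 1) := eval_bound _ w (n + 1) hdegk
        _ = (∑ i ∈ Finset.range (n + 1), |(Polynomial.derivative^[k + 1] p).coeff i|)
              * max 1 (Complex.abs w) ^ (n + 1) := by
            congr 1
            apply Finset.sum_congr rfl
            intro i _
            rw [Polynomial.coeff_map]
            exact Complex.abs_ofReal _
        _ ≤ (∑ i ∈ Finset.range (n + 1), |(Polynomial.derivative^[k + 1] p).coeff i|)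
              * pertR p ^ (n + 1) := by
            apply mul_le_mul_of_nonneg_left _ (Finset.sum_nonneg fun i _ => abs_nonneg _)
            apply pow_le_pow_left₀ (le_trans zero_le_one (le_max_left _ _))
            exact max_le (le_max_left 1 _) hwsize
    have hsum2 : ∑ k ∈ Finset.range n, ε ^ 2
        * ((∑ i ∈ Finset.range (n + 1), |(Polynomial.derivative^[k + 1] p).coeff i|)
            * pertR p ^ (n + 1))
        = ε ^ 2 * (pertCK p * pertR p ^ (n + 1)) := by
      unfold pertCK
      rw [← hn']
      calc ∑ k ∈ Finset.range n, ε ^ 2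
          * ((∑ i ∈ Finset.range (n + 1), |(Polynomial.derivative^[k + 1] p).coeff i|)
              * pertR p ^ (n + 1))
          = ∑ k ∈ Finset.range n, (∑ i ∈ Finset.range (n + 1),
              |(Polynomial.derivative^[k + 1] p).coeff i|) * (ε ^ 2 * pertR p ^ (n + 1)) :=
            Finset.sum_congr rfl fun k _ => by ring
        _ = (∑ k ∈ Finset.range n, ∑ i ∈ Finset.range (n + 1),
              |(Polynomial.derivative^[k + 1] p).coeff i|) * (ε ^ 2 * pertR p ^ (n + 1)) :=
            (Finset.sum_mul _ _ _).symm
        _ = ε ^ 2 * ((∑ k ∈ Finset.range n, ∑ i ∈ Finset.range (n + 1),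
              |(Polynomial.derivative^[k + 1] p).coeff i|) * pertR p ^ (n + 1)) := by ring
    have hchain : ε * Complex.abs (Polynomial.aeval w p)
        ≤ ε ^ 2 * (pertCK p * pertR p ^ (n + 1)) := by
      rw [← hsum2]
      exact le_trans habs1 (Finset.sum_le_sum hterm)
    have heP : Complex.abs (P.eval w) = Complex.abs (Polynomial.aeval w p) := by
      rw [hPdef, ← aeval_eq_eval_map]
    rw [heP]
    have h2 : ε * Complex.abs (Polynomial.aeval w p)
        ≤ ε * (ε * (pertCK p * pertR p ^ (n + 1))) := by
      calc ε * Complex.abs (Polynomial.aeval w p)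
          ≤ ε ^ 2 * (pertCK p * pertR p ^ (n + 1)) := hchain
        _ = ε * (ε * (pertCK p * pertR p ^ (n + 1))) := by ring
    exact le_of_mul_le_mul_left h2 hε0
  -- find a close root of P
  obtain ⟨r, hrin, hrle⟩ := exists_close_root P (by rw [hPdeg]; exact hn) w
  have hPlc : Complex.abs P.leadingCoeff = |lc| := by
    have : P.leadingCoeff = algebraMap ℝ ℂ p.leadingCoeff := by
      rw [Polynomial.leadingCoeff, hPdeg, hPdef, Polynomial.coeff_map]
      rfl
    rw [this, ← hlc']
    exact Complex.abs_ofReal _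
  have hrb : Complex.abs (w - r) ^ n ≤ εb ^ n := by
    rw [hPdeg, hPlc] at hrle
    calc Complex.abs (w - r) ^ n
        ≤ Complex.abs (P.eval w) / |lc| := hrle
      _ ≤ (ε * (pertCK p * pertR p ^ (n + 1))) / |lc| := by
          exact (div_le_div_iff_of_pos_right hlcpos).2 hPweval
      _ = ε * pertC p := by
          unfold pertC
          rw [← hn']
          ring
      _ ≤ εb ^ n := hsmall
  have hwr : Complex.abs (w - r) ≤ εb :=
    (pow_le_pow_iff_left₀ (AbsoluteValue.nonneg _ _) hεb.le hn).1 hrb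
  have hrim : |r.im| ≤ μ := by
    apply hroots r
    rw [aeval_eq_eval_map]
    exact Polynomial.isRoot_of_mem_roots hrin
  have him : |w.im| ≤ μ + εb := by
    have h2 : |w.im - r.im| ≤ Complex.abs (w - r) := by
      rw [← Complex.sub_im]
      exact Complex.abs_im_le_abs _
    calc |w.im| = |r.im + (w.im - r.im)| := by norm_num
      _ ≤ |r.im| + |w.im - r.im| := abs_add_le _ _
      _ ≤ μ + εb := add_le_add hrim (le_trans h2 hwr)
  calc w.im ^ 2 = |w.im| ^ 2 := (_root_.sq_abs _).symm
    _ ≤ (μ + εb) ^ 2 := pow_le_pow_left₀ (abs_nonneg _) him 2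

theorem stmt_17 (p : Polynomial ℝ) (μ l : ℝ) (hμ : 0 ≤ μ) (hl : 0 < l)
    (hroots : ∀ z : ℂ, Polynomial.aeval z p = 0 → |z.im| ≤ μ) :
    ∀ z : ℂ,
      Polynomial.aeval z
        (∑ k ∈ Finset.range (p.natDegree / 2 + 1),
          Polynomial.C ((-1 : ℝ) ^ k * l ^ (2 * k + 1) / (Nat.factorial (2 * k + 1))) *
            (Polynomial.derivative^[2 * k] p)) = 0 →
      |z.im| ≤ Real.sqrt (max (μ ^ 2 - l ^ 2 / 3) 0) := by
  intro z hz
  have hp : p ≠ 0 := by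
    intro h
    have h1 := hroots (((μ + 1 : ℝ) : ℂ) * I) (by rw [h]; simp)
    have h2 : (((μ + 1 : ℝ) : ℂ) * I).im = μ + 1 := by
      simp [Complex.mul_im]
    rw [h2] at h1
    have : |μ + 1| = μ + 1 := abs_of_pos (by linarith)
    linarith [this ▸ h1]
  set n := p.natDegree with hn
  have hpoly : (∑ k ∈ Finset.range (p.natDegree / 2 + 1),
      Polynomial.C ((-1 : ℝ) ^ k * l ^ (2 * k + 1) / (Nat.factorial (2 * k + 1))) *
        (Polynomial.derivative^[2 * k] p)) = opApply (sinP l (n + 1)) p := by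
    rw [show sinP l (n + 1)
        = evenPoly (fun j => (-1 : ℝ) ^ j * l ^ (2 * j + 1) / (Nat.factorial (2 * j + 1))) (n + 1)
        from rfl,
      opApply_evenPoly _ _ _ (by omega)]
    have h1 : ∀ k, Polynomial.C ((-1 : ℝ) ^ k * l ^ (2 * k + 1) / (Nat.factorial (2 * k + 1)))
        * (Polynomial.derivative^[2 * k] p)
        = ((-1 : ℝ) ^ k * l ^ (2 * k + 1) / (Nat.factorial (2 * k + 1)))
          • (Polynomial.derivative^[2 * k] p) :=
      fun k => (Polynomial.smul_eq_C_mul _).symm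
    rw [Finset.sum_congr rfl (fun k _ => h1 k)]
    apply Finset.sum_subset (Finset.range_subset_range.2 (by omega : n / 2 + 1 ≤ n + 1))
    intro j hj1 hj2
    have hj3 : p.natDegree < 2 * j := by
      simp only [Finset.mem_range] at hj1 hj2
      omega
    rw [Polynomial.iterate_derivative_eq_zero hj3, smul_zero]
  rw [hpoly] at hz
  have hlcne : p.leadingCoeff ≠ 0 := Polynomial.leadingCoeff_ne_zero.2 hp
  by_cases hn0 : n = 0
  · exfalso
    have hfne : (sinP l (n + 1)).coeff 0 * p.leadingCoeff ≠ 0 := by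
      rw [sinP_coeff_zero _ _ (by omega)]
      exact mul_ne_zero (ne_of_gt hl) hlcne
    have hfacts := opApply_facts (sinP l (n + 1)) p hfne
    have hq0 : opApply (sinP l (n + 1)) p ≠ 0 := by
      intro h
      apply hfne
      rw [← hfacts.2, h, Polynomial.leadingCoeff_zero]
    have hqdeg : (opApply (sinP l (n + 1)) p).natDegree = 0 := by
      rw [hfacts.1, ← hn, hn0]
    have hqC : opApply (sinP l (n + 1)) p
        = Polynomial.C ((opApply (sinP l (n + 1)) p).coeff 0) :=
      Polynomial.eq_C_of_natDegree_eq_zero hqdeg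
    rw [hqC, Polynomial.aeval_C] at hz
    have : (opApply (sinP l (n + 1)) p).coeff 0 = 0 :=
      (map_eq_zero_iff (algebraMap ℝ ℂ) (algebraMap ℝ ℂ).injective).1 hz
    exact hq0 (by rw [hqC, this, map_zero])
  · apply Real.abs_le_sqrt
    set T := max (μ ^ 2 - l ^ 2 / 3) 0 with hT
    have hT0 : 0 ≤ T := le_max_right _ _
    set Cf := 2 * μ + 2 + l ^ 2 with hCf
    have hCf0 : 0 < Cf := by positivity
    have key : ∀ εb : ℝ, 0 < εb → εb ≤ 1 → z.im ^ 2 ≤ T + Cf * εb := by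
      intro εb hεb0 hεb1
      -- choose m
      have htpos : 0 < min (εb ^ n / ((l + 1) * (pertC p + 1))) (min εb (1 / (l + 1))) := by
        have h1 : 0 < εb ^ n := pow_pos hεb0 n
        have h2 : 0 < (l + 1) * (pertC p + 1) := by
          have := pertC_nonneg p
          positivity
        have h3 : 0 < εb ^ n / ((l + 1) * (pertC p + 1)) := div_pos h1 h2
        have h4 : 0 < 1 / (l + 1) := by positivity
        exact lt_min h3 (lt_min hεb0 h4)
      obtain ⟨m, hm⟩ := exists_pow_lt_of_lt_one htpos (by norm_num : (1 / 2 : ℝ) < 1)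
      have hhalfm : 0 < (1 / 2 : ℝ) ^ m := by positivity
      set ε := l / 2 ^ m with hε
      have hεeq : ε = l * (1 / 2) ^ m := by
        rw [hε, div_pow, one_pow]
        ring
      have hε0 : 0 < ε := by positivity
      have hε1 : ε ≤ 1 := by
        have h1 : (1 / 2 : ℝ) ^ m < 1 / (l + 1) :=
          lt_of_lt_of_le hm (le_trans (min_le_right _ _) (min_le_right _ _))
        rw [hεeq]
        calc l * (1 / 2) ^ m ≤ l * (1 / (l + 1)) :=
              mul_le_mul_of_nonneg_left h1.le hl.le
          _ ≤ 1 := by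
              rw [mul_one_div, div_le_one (by linarith)]
              linarith
      have hsmall : ε * pertC p ≤ εb ^ n := by
        have h1 : (1 / 2 : ℝ) ^ m < εb ^ n / ((l + 1) * (pertC p + 1)) :=
          lt_of_lt_of_le hm (min_le_left _ _)
        have hC0 := pertC_nonneg p
        calc ε * pertC p = (1 / 2) ^ m * (l * pertC p) := by rw [hεeq]; ring
          _ ≤ (εb ^ n / ((l + 1) * (pertC p + 1))) * (l * pertC p) := by
              apply mul_le_mul_of_nonneg_right h1.le
              positivity
          _ ≤ (εb ^ n / ((l + 1) * (pertC p + 1))) * ((l + 1) * (pertC p + 1)) := by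
              apply mul_le_mul_of_nonneg_left _ (by positivity)
              nlinarith
          _ = εb ^ n := by
              field_simp
      have hstrip := pert_bound p hp hn0 μ hroots ε εb hε0 hε1 hεb0 hsmall
      have hiter := sin_iter p hp m l hl ((μ + εb) ^ 2) hstrip z hz
      -- arithmetic
      have hq : (1 / 4 : ℝ) ^ m ≤ εb := by
        calc (1 / 4 : ℝ) ^ m ≤ (1 / 2 : ℝ) ^ m :=
              pow_le_pow_left₀ (by norm_num) (by norm_num) m
          _ ≤ εb := (lt_of_lt_of_le hm (le_trans (min_le_right _ _) (min_le_left _ _))).le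
      have hσ : (1 - εb) / 3 ≤ sigma3 m := by
        unfold sigma3
        linarith
      have h1 : (μ + εb) ^ 2 - l ^ 2 * sigma3 m ≤ (μ ^ 2 - l ^ 2 / 3) + Cf * εb := by
        have h2 : l ^ 2 * ((1 - εb) / 3) ≤ l ^ 2 * sigma3 m :=
          mul_le_mul_of_nonneg_left hσ (by positivity)
        rw [hCf]
        nlinarith [sq_nonneg εb]
      calc z.im ^ 2 ≤ max ((μ + εb) ^ 2 - l ^ 2 * sigma3 m) 0 := hiter
        _ ≤ max ((μ ^ 2 - l ^ 2 / 3) + Cf * εb) 0 := max_le_max h1 (le_refl 0)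
        _ ≤ T + Cf * εb := by
            apply max_le
            · exact add_le_add_left (le_max_left _ _) _
            · positivity
    by_contra hcc
    push_neg at hcc
    have hTlt : T < z.im ^ 2 := hcc
    set εb := min 1 ((z.im ^ 2 - T) / (2 * Cf)) with hεb
    have hεb0 : 0 < εb := by
      apply lt_min one_pos
      apply div_pos (by linarith) (by positivity)
    have hεb1 : εb ≤ 1 := min_le_left _ _
    have hk := key εb hεb0 hεb1
    have hbd : Cf * εb ≤ (z.im ^ 2 - T) / 2 := by
      calc Cf * εb ≤ Cf * ((z.im ^ 2 - T) / (2 * Cf)) :=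
            mul_le_mul_of_nonneg_left (min_le_right _ _) hCf0.le
        _ = (z.im ^ 2 - T) / 2 := by field_simp
    clear_value T Cf εb
    linarith [hk, hbd, hTlt]
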